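/- If a graph G is complete on n ≥ 2 vertices, then any quantum c-coloring of K_n requires c ≥ n; i.e., χ_q(K_n) = n. -/

import Mathlib

open Matrix BigOperators

lemma aux_trace_re_nonneg {d : ℕ} {M : Matrix (Fin d) (Fin d) ℂ}
    (hH : M.IsHermitian) (hI : M * M = M) : 0 ≤ (M.trace).re := by
  have hM : M = Mᴴ * M := by rw [hH.eq, hI]
  have : M.trace = ∑ i, ∑ j, (starRingEnd ℂ) (M j i) * M j i := by
    conv_lhs => rw [hM]
    simp [Matrix.trace, Matrix.mul_apply, Matrix.diag, Matrix.conjTranspose_apply]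
  rw [this]
  simp only [Complex.re_sum]
  apply Finset.sum_nonneg; intro i _
  apply Finset.sum_nonneg; intro j _
  rw [Complex.conj_mul', ← Complex.ofReal_pow, Complex.ofReal_re]
  positivity

/-- A quantum `c`-coloring of `G` in dimension `d`. -/
def IsQuantumColoring {n d c : ℕ} (G : SimpleGraph (Fin n))
    (P : Fin n → Fin c → Matrix (Fin d) (Fin d) ℂ) : Prop :=
  (∀ v k, (P v k).IsHermitian) ∧
  (∀ v k, P v k * P v k = P v k) ∧
  (∀ v, ∑ k, P v k = 1) ∧
  (∀ v w, G.Adj v w → ∀ k, P v k * P w k = 0)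

/-- The quantum chromatic number: the least `c` admitting a quantum `c`-coloring
in some dimension `d > 0`. -/
noncomputable def quantumChromaticNumber {n : ℕ} (G : SimpleGraph (Fin n)) : ℕ :=
  sInf {c | ∃ d, 0 < d ∧
    ∃ P : Fin n → Fin c → Matrix (Fin d) (Fin d) ℂ, IsQuantumColoring G P}

lemma aux_lower {n : ℕ} :
    ∀ c d : ℕ, 0 < d →
      ∀ P : Fin n → Fin c → Matrix (Fin d) (Fin d) ℂ,
        IsQuantumColoring (⊤ : SimpleGraph (Fin n)) P → n ≤ c := by
  intro c d hd P hP
  obtain ⟨hH, hId, hSum, hOrth⟩ := hP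
  set Q : Fin c → Matrix (Fin d) (Fin d) ℂ := fun k => ∑ v, P v k with hQ
  have hQH : ∀ k, (Q k).IsHermitian := by
    intro k
    unfold Q
    rw [Matrix.IsHermitian, Matrix.conjTranspose_sum]
    exact Finset.sum_congr rfl fun v _ => (hH v k)
  have hQI : ∀ k, Q k * Q k = Q k := by
    intro k
    unfold Q
    rw [Finset.sum_mul_sum]
    refine Finset.sum_congr rfl fun v _ => ?_
    rw [Finset.sum_eq_single v]
    · exact hId v k
    · intro w _ hw
      exact hOrth v w (by simp [Ne.symm hw]) k
    · simp
  have hbound : ∀ k, ((Q k).trace).re ≤ (d : ℝ) := by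
    intro k
    have h1H : (1 - Q k).IsHermitian := by
      rw [Matrix.IsHermitian, Matrix.conjTranspose_sub, Matrix.conjTranspose_one, (hQH k).eq]
    have h1I : (1 - Q k) * (1 - Q k) = 1 - Q k := by
      rw [mul_sub, sub_mul, sub_mul, one_mul, mul_one, hQI k]
      simp
    have := aux_trace_re_nonneg h1H h1I
    rw [Matrix.trace_sub, Matrix.trace_one, Complex.sub_re] at this
    simp only [Finset.card_univ, Fintype.card_fin] at this
    have hre : ((d : ℂ)).re = (d : ℝ) := by simp
    simp only [Complex.natCast_re] at this
    linarith
  have htot : ∑ k, ((Q k).trace).re = (n : ℝ) * d := by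
    have : ∑ k, (Q k).trace = (n : ℂ) * d := by
      unfold Q
      simp only [Matrix.trace_sum]
      rw [Finset.sum_comm]
      have : ∀ v : Fin n, ∑ k, (P v k).trace = (d : ℂ) := by
        intro v
        rw [← Matrix.trace_sum, hSum v, Matrix.trace_one]
        simp
      rw [Finset.sum_congr rfl fun v _ => this v]
      simp [mul_comm]
    have := congrArg Complex.re this
    simpa [Complex.re_sum] using this
  have hle : (n : ℝ) * d ≤ (c : ℝ) * d := by
    rw [← htot]
    calc ∑ k, ((Q k).trace).re ≤ ∑ _k : Fin c, (d : ℝ) :=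
          Finset.sum_le_sum fun k _ => hbound k
      _ = (c : ℝ) * d := by simp [mul_comm]
  have hdpos : (0 : ℝ) < d := by exact_mod_cast hd
  have := (mul_le_mul_iff_of_pos_right hdpos).mp hle
  exact_mod_cast this

/-- Any quantum `c`-coloring of the complete graph `K_n` (`n ≥ 2`) requires
`c ≥ n`; consequently `χ_q(K_n) = n`. -/
theorem quantum_chromatic_complete {n : ℕ} (hn : 2 ≤ n) :
    (∀ c d : ℕ, 0 < d →
      ∀ P : Fin n → Fin c → Matrix (Fin d) (Fin d) ℂ,
        IsQuantumColoring (⊤ : SimpleGraph (Fin n)) P → n ≤ c) ∧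
    quantumChromaticNumber (⊤ : SimpleGraph (Fin n)) = n := by
  refine ⟨aux_lower, ?_⟩
  have hmem : n ∈ {c | ∃ d, 0 < d ∧
      ∃ P : Fin n → Fin c → Matrix (Fin d) (Fin d) ℂ,
        IsQuantumColoring (⊤ : SimpleGraph (Fin n)) P} := by
    refine ⟨1, one_pos, fun v k => if v = k then 1 else 0, ?_, ?_, ?_, ?_⟩
    · intro v k; simp only []; split_ifs <;> simp [Matrix.isHermitian_one, Matrix.isHermitian_zero]
    · intro v k; simp only []; split_ifs <;> simp
    · intro v; simp
    · intro v w hvw k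
      rw [SimpleGraph.top_adj] at hvw
      simp only []
      split_ifs with h1 h2
      · exact absurd (h1.trans h2.symm) hvw
      · simp
      · simp
      · simp
  apply le_antisymm
  · exact Nat.sInf_le hmem
  · refine le_csInf ⟨n, hmem⟩ ?_
    rintro c ⟨d, hd, P, hPc⟩
    exact aux_lower c d hd P hPc
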